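/- Let q be a prime power and let G be a cyclic subgroup of PGL(2, F_q) of order d acting on the projective line P¹(F_q). Then every orbit of G on P¹(F_q) has size 1 or d. -/

import Mathlib

open scoped LinearAlgebra.Projectivization
open Projectivization Matrix

/-- The natural action of `GL(2, F)` on the projective line `ℙ¹(F)`, induced by the action of
invertible matrices on `F²`. -/
noncomputable instance glProjAction {F : Type*} [Field F] :
    MulAction (GL (Fin 2) F) (ℙ F (Fin 2 → F)) where
  smul g x := Projectivization.map
    ((Matrix.GeneralLinearGroup.toLin g).toLinearEquiv : (Fin 2 → F) →ₗ[F] (Fin 2 → F))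
    (Matrix.GeneralLinearGroup.toLin g).toLinearEquiv.injective x
  one_smul x := by
    induction x using Projectivization.ind with
    | h v hv =>
      show Projectivization.map _ _ _ = _
      rw [Projectivization.map_mk]
      congr 1
      show Matrix.mulVecLin ((1 : GL (Fin 2) F) : Matrix (Fin 2) (Fin 2) F) v = v
      simp
  mul_smul g h x := by
    induction x using Projectivization.ind with
    | h v hv =>
      show Projectivization.map _ _ _ =
        Projectivization.map _ _ (Projectivization.map _ _ _)
      rw [Projectivization.map_mk, Projectivization.map_mk, Projectivization.map_mk]
      congr 1
      show Matrix.mulVecLin ((g * h : GL (Fin 2) F) : Matrix (Fin 2) (Fin 2) F) v =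
        Matrix.mulVecLin (g : Matrix (Fin 2) (Fin 2) F)
          (Matrix.mulVecLin (h : Matrix (Fin 2) (Fin 2) F) v)
      simp [Matrix.mulVecLin_mul]

section Aux

variable {F : Type*} [Field F]

lemma GLaux.mulVec_ne_zero (g : GL (Fin 2) F) {v : Fin 2 → F} (hv : v ≠ 0) :
    (g : Matrix (Fin 2) (Fin 2) F).mulVec v ≠ 0 := by
  intro h
  apply hv
  have h2 : ((g⁻¹ : GL (Fin 2) F) : Matrix (Fin 2) (Fin 2) F) * g = 1 := by
    rw [← Units.val_mul, inv_mul_cancel, Units.val_one]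
  have := congrArg (fun w => ((g⁻¹ : GL (Fin 2) F) : Matrix (Fin 2) (Fin 2) F).mulVec w) h
  simp only [Matrix.mulVec_mulVec, h2, Matrix.one_mulVec, Matrix.mulVec_zero] at this
  exact this

lemma GLaux.smul_mk (g : GL (Fin 2) F) (v : Fin 2 → F) (hv : v ≠ 0) :
    g • Projectivization.mk F v hv
      = Projectivization.mk F ((g : Matrix (Fin 2) (Fin 2) F).mulVec v)
          (GLaux.mulVec_ne_zero g hv) := by
  show Projectivization.map _ _ _ = _
  rw [Projectivization.map_mk]
  congr 1

lemma GLaux.exists_unit_eigen (g : GL (Fin 2) F) {x y : ℙ F (Fin 2 → F)} (h : g • x = y) :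
    ∃ a : Fˣ, (g : Matrix (Fin 2) (Fin 2) F).mulVec x.rep = (a : F) • y.rep := by
  have key : Projectivization.mk F ((g : Matrix (Fin 2) (Fin 2) F).mulVec x.rep)
      (GLaux.mulVec_ne_zero g x.rep_nonzero) = Projectivization.mk F y.rep y.rep_nonzero := by
    rw [← GLaux.smul_mk g x.rep x.rep_nonzero, x.mk_rep, h, y.mk_rep]
  obtain ⟨a, ha⟩ := (Projectivization.mk_eq_mk_iff F _ _ _ _).mp key
  exact ⟨a, by rw [← ha, Units.smul_def]⟩

lemma GLaux.smul_of_scalar (g : GL (Fin 2) F) (a : F)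
    (hg : (g : Matrix (Fin 2) (Fin 2) F) = a • 1) (x : ℙ F (Fin 2 → F)) : g • x = x := by
  have ha : a ≠ 0 := by
    rintro rfl
    have h1 : ((g : Matrix (Fin 2) (Fin 2) F)) * ((g⁻¹ : GL (Fin 2) F) : Matrix (Fin 2) (Fin 2) F)
        = 1 := by rw [← Units.val_mul, mul_inv_cancel, Units.val_one]
    rw [hg] at h1
    simp only [zero_smul, zero_mul] at h1
    exact zero_ne_one h1
  induction x using Projectivization.ind with
  | h v hv =>
    rw [GLaux.smul_mk, Projectivization.mk_eq_mk_iff]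
    refine ⟨Units.mk0 a ha, ?_⟩
    simp [hg, Matrix.smul_mulVec, Units.smul_def]

lemma GLaux.scalar_of_mem_center {g : GL (Fin 2) F}
    (hg : g ∈ Subgroup.center (GL (Fin 2) F)) :
    ∃ a : F, (g : Matrix (Fin 2) (Fin 2) F) = a • 1 := by
  have hc : ∀ t : TransvectionStruct (Fin 2) F,
      Commute t.toMatrix (g : Matrix (Fin 2) (Fin 2) F) := by
    intro t
    have ht := Subgroup.mem_center_iff.mp hg ⟨t.toMatrix, t.inv.toMatrix, t.mul_inv, t.inv_mul⟩
    exact congrArg Units.val ht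
  obtain ⟨r, hr⟩ := Matrix.mem_range_scalar_of_commute_transvectionStruct hc
  refine ⟨r, ?_⟩
  rw [← hr, Matrix.scalar_apply]
  ext i j
  by_cases hij : i = j <;> simp [hij, Matrix.diagonal, Matrix.one_apply]

lemma GLaux.mem_center_of_scalar {g : GL (Fin 2) F} (a : F)
    (hg : (g : Matrix (Fin 2) (Fin 2) F) = a • 1) :
    g ∈ Subgroup.center (GL (Fin 2) F) :=
  Subgroup.mem_center_iff.mpr fun h => Units.ext (by
    show (h : Matrix (Fin 2) (Fin 2) F) * g = (g : Matrix (Fin 2) (Fin 2) F) * h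
    rw [hg, smul_mul_assoc, mul_smul_comm, one_mul, mul_one])

lemma GLaux.rep_li {x y : ℙ F (Fin 2 → F)} (h : x ≠ y) :
    LinearIndependent F ![x.rep, y.rep] := by
  rw [linearIndependent_fin2]
  refine ⟨by simpa using y.rep_nonzero, fun a ha => ?_⟩
  simp only [Matrix.cons_val_one, Matrix.head_cons, Matrix.cons_val_zero] at ha
  have ha0 : a ≠ 0 := by
    rintro rfl
    rw [zero_smul] at ha
    exact x.rep_nonzero ha.symm
  apply h
  rw [← x.mk_rep, ← y.mk_rep, Projectivization.mk_eq_mk_iff]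
  exact ⟨Units.mk0 a ha0, by simpa [Units.smul_def] using ha⟩

lemma GLaux.eq_scalar_of_pair {g : GL (Fin 2) F} {v w : Fin 2 → F}
    (hli : LinearIndependent F ![v, w]) (a : F)
    (hv : (g : Matrix (Fin 2) (Fin 2) F).mulVec v = a • v)
    (hw : (g : Matrix (Fin 2) (Fin 2) F).mulVec w = a • w) :
    (g : Matrix (Fin 2) (Fin 2) F) = a • 1 := by
  have hcard : Fintype.card (Fin 2) = Module.finrank F (Fin 2 → F) := by
    simp [Module.finrank_fin_fun]
  let b := basisOfLinearIndependentOfCardEqFinrank hli hcard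
  have hb : ⇑b = ![v, w] := coe_basisOfLinearIndependentOfCardEqFinrank hli hcard
  have key : Matrix.toLin' (g : Matrix (Fin 2) (Fin 2) F)
      = Matrix.toLin' (a • (1 : Matrix (Fin 2) (Fin 2) F)) := by
    apply b.ext
    intro i
    fin_cases i <;>
      simp [hb, Matrix.toLin'_apply, hv, hw, Matrix.smul_mulVec]
  exact Matrix.toLin'.injective key

lemma GLaux.mem_center_of_fix3 {g : GL (Fin 2) F} {x y z : ℙ F (Fin 2 → F)}
    (hxy : x ≠ y) (hxz : x ≠ z) (hyz : y ≠ z)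
    (hx : g • x = x) (hy : g • y = y) (hz : g • z = z) :
    g ∈ Subgroup.center (GL (Fin 2) F) := by
  obtain ⟨a, ha⟩ := GLaux.exists_unit_eigen g hx
  obtain ⟨b, hb⟩ := GLaux.exists_unit_eigen g hy
  obtain ⟨c, hc⟩ := GLaux.exists_unit_eigen g hz
  have hli := GLaux.rep_li hxy
  have hcard : Fintype.card (Fin 2) = Module.finrank F (Fin 2 → F) := by
    simp [Module.finrank_fin_fun]
  let bb := basisOfLinearIndependentOfCardEqFinrank hli hcard
  have hbb : ⇑bb = ![x.rep, y.rep] := coe_basisOfLinearIndependentOfCardEqFinrank hli hcard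
  set α := bb.repr z.rep 0 with hα
  set β := bb.repr z.rep 1 with hβ
  have hrep : α • x.rep + β • y.rep = z.rep := by
    have h0 := bb.sum_repr z.rep
    rw [Fin.sum_univ_two] at h0
    rw [← h0, hbb]
    simp
    rfl
  have hαne : α ≠ 0 := by
    rintro h0
    apply hyz
    rw [h0, zero_smul, zero_add] at hrep
    have hβne : β ≠ 0 := by
      intro h00
      rw [h00, zero_smul] at hrep
      exact z.rep_nonzero hrep.symm
    rw [← y.mk_rep, ← z.mk_rep, Projectivization.mk_eq_mk_iff]
    exact ⟨(Units.mk0 β hβne)⁻¹, by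
      rw [Units.smul_def, ← hrep]
      simp [smul_smul, inv_mul_cancel₀ hβne]⟩
  have hβne : β ≠ 0 := by
    rintro h0
    apply hxz
    rw [h0, zero_smul, add_zero] at hrep
    have hαne' : α ≠ 0 := by
      intro h00
      rw [h00, zero_smul] at hrep
      exact z.rep_nonzero hrep.symm
    rw [← x.mk_rep, ← z.mk_rep, Projectivization.mk_eq_mk_iff]
    exact ⟨(Units.mk0 α hαne')⁻¹, by
      rw [Units.smul_def, ← hrep]
      simp [smul_smul, inv_mul_cancel₀ hαne']⟩
  have e2 : ((c : F) * α - (a : F) * α) • x.rep + ((c : F) * β - (b : F) * β) • y.rep = 0 := by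
    have e1 : (g : Matrix (Fin 2) (Fin 2) F).mulVec (α • x.rep + β • y.rep)
        = (c : F) • (α • x.rep + β • y.rep) := by rw [hrep, hc]
    rw [Matrix.mulVec_add, Matrix.mulVec_smul, Matrix.mulVec_smul, ha, hb] at e1
    rw [smul_add] at e1
    simp only [smul_smul] at e1
    rw [mul_comm α (a : F), mul_comm β (b : F)] at e1
    have e1' : ((c : F) * α) • x.rep + ((c : F) * β) • y.rep
        - (((a : F) * α) • x.rep + ((b : F) * β) • y.rep) = 0 := sub_eq_zero.mpr e1.symm
    rw [sub_smul, sub_smul, ← e1']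
    abel
  obtain ⟨h1, h2⟩ := (LinearIndependent.pair_iff.mp hli) _ _ e2
  have hca : (c : F) = (a : F) := by
    have := sub_eq_zero.mp h1
    exact mul_right_cancel₀ hαne this
  have hcb : (c : F) = (b : F) := by
    have := sub_eq_zero.mp h2
    exact mul_right_cancel₀ hβne this
  apply GLaux.mem_center_of_scalar (a : F)
  refine GLaux.eq_scalar_of_pair hli (a : F) ha ?_
  rw [hb, ← hca, hcb]

lemma GLaux.sq_mem_center_of_swap {g : GL (Fin 2) F} {x y : ℙ F (Fin 2 → F)} (hxy : x ≠ y)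
    (hx : g • x = y) (hy : g • y = x) : g ^ 2 ∈ Subgroup.center (GL (Fin 2) F) := by
  obtain ⟨b, hb⟩ := GLaux.exists_unit_eigen g hx
  obtain ⟨c, hc⟩ := GLaux.exists_unit_eigen g hy
  have hli := GLaux.rep_li hxy
  apply GLaux.mem_center_of_scalar ((b : F) * (c : F))
  have hsq : ((g ^ 2 : GL (Fin 2) F) : Matrix (Fin 2) (Fin 2) F)
      = (g : Matrix (Fin 2) (Fin 2) F) * (g : Matrix (Fin 2) (Fin 2) F) := by
    rw [← Units.val_mul, pow_two]
  refine GLaux.eq_scalar_of_pair hli _ ?_ ?_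
  · rw [hsq, ← Matrix.mulVec_mulVec, hb, Matrix.mulVec_smul, hc, smul_smul]
  · rw [hsq, ← Matrix.mulVec_mulVec, hc, Matrix.mulVec_smul, hb, smul_smul,
      mul_comm ((c : F)) ((b : F))]

end Aux

/-- If a subgroup of `PGL(2, F_q)`, represented as the image in
`PGL(2, F_q) = GL(2, F_q)/Z` of a subgroup `G ≤ GL(2, F_q)` containing the center, is cyclic
of order `d`, then every orbit of `G` on the projective line `ℙ¹(F_q)` has size `1` or `d`. -/
theorem stmt_8 (q d : ℕ) (hq : IsPrimePow q) (F : Type*) [Field F] [Fintype F]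
    (hF : Fintype.card F = q) (G : Subgroup (GL (Fin 2) F))
    (hZ : Subgroup.center (GL (Fin 2) F) ≤ G)
    (hcyc : IsCyclic
      (G.map (QuotientGroup.mk' (Subgroup.center (GL (Fin 2) F)))))
    (hd : Nat.card (G.map (QuotientGroup.mk' (Subgroup.center (GL (Fin 2) F)))) = d)
    (x : ℙ F (Fin 2 → F)) :
    Nat.card (MulAction.orbit G x) = 1 ∨ Nat.card (MulAction.orbit G x) = d := by
  classical
  set Z := Subgroup.center (GL (Fin 2) F) with hZdef
  set π := QuotientGroup.mk' Z with hπdef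
  obtain ⟨gen, hgen⟩ := hcyc.exists_generator
  obtain ⟨σ, hσG, hσ⟩ := Subgroup.mem_map.mp gen.2
  set p := MulAction.period σ x with hpdef
  have hfix : ∀ z ∈ Z, ∀ y : ℙ F (Fin 2 → F), z • y = y := fun z hz y => by
    obtain ⟨a, ha⟩ := GLaux.scalar_of_mem_center hz
    exact GLaux.smul_of_scalar z a ha y
  -- orbit of G equals orbit of the cyclic group generated by σ
  have horb : MulAction.orbit G x = MulAction.orbit (Subgroup.zpowers σ) x := by
    ext w
    constructor
    · rintro ⟨⟨g, hg⟩, rfl⟩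
      have hgH : π g ∈ G.map π := Subgroup.mem_map_of_mem π hg
      obtain ⟨n, hn⟩ := hgen ⟨π g, hgH⟩
      have hval : (gen : GL (Fin 2) F ⧸ Z) ^ n = π g := by
        have := congrArg Subtype.val hn
        simpa using this
      have hzZ : (σ ^ n)⁻¹ * g ∈ Z := by
        have : π ((σ ^ n)⁻¹ * g) = 1 := by
          rw [_root_.map_mul, _root_.map_inv, _root_.map_zpow, hσ, hval, inv_mul_cancel]
        rwa [← QuotientGroup.ker_mk' Z, MonoidHom.mem_ker]
      refine ⟨⟨σ ^ n, Subgroup.zpow_mem (Subgroup.zpowers σ) (Subgroup.mem_zpowers σ) n⟩, ?_⟩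
      show σ ^ n • x = (⟨g, hg⟩ : G) • x
      have hgeq : g = σ ^ n * ((σ ^ n)⁻¹ * g) := by group
      show σ ^ n • x = g • x
      rw [hgeq, mul_smul, hfix _ hzZ]
    · rintro ⟨⟨g, hg⟩, rfl⟩
      exact ⟨⟨g, Subgroup.zpowers_le.mpr hσG hg⟩, rfl⟩
  have hcardorb : Nat.card (MulAction.orbit G x) = p := by
    rw [horb]
    rw [Nat.card_congr (MulAction.orbitZPowersEquiv σ x), Nat.card_zmod]
    rfl
  -- basic facts
  haveI : Finite (GL (Fin 2) F) := inferInstance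
  have hd0 : 0 < d := hd ▸ Nat.card_pos
  have hgend : gen ^ d = 1 := by rw [← hd]; exact pow_card_eq_one'
  have hσdZ : σ ^ d ∈ Z := by
    have : π (σ ^ d) = 1 := by
      rw [map_pow, hσ]
      have := congrArg Subtype.val hgend
      simpa using this
    rwa [← QuotientGroup.ker_mk' Z, MonoidHom.mem_ker]
  have hσd : σ ^ d • x = x := hfix _ hσdZ x
  have hpd : p ∣ d := MulAction.pow_smul_eq_iff_period_dvd.mp hσd
  have hp0 : 0 < p := MulAction.period_pos_of_fixed hd0 hσd
  have hgenord : orderOf gen = d := by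
    rw [← hd]
    exact orderOf_eq_card_of_forall_mem_zpowers hgen
  rcases Nat.lt_or_ge p 2 with h1 | h2
  · left
    rw [hcardorb]
    omega
  · -- 2 ≤ p : show the orbit has size exactly d
    right
    rw [hcardorb]
    have hσpZ : σ ^ p ∈ Z := by
      rcases Nat.lt_or_ge p 3 with h2' | h3
      · -- p = 2
        have hp2 : p = 2 := by omega
        have hxne : x ≠ σ • x := by
          intro hcontr
          have : p = 1 := MulAction.period_eq_one_iff.mpr hcontr.symm
          omega
        have hswap : σ • (σ • x) = x := by
          have h := MulAction.pow_period_smul σ x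
          rw [← hpdef, hp2] at h
          rw [smul_smul, ← pow_two]
          exact h
        have hsq := GLaux.sq_mem_center_of_swap hxne rfl hswap
        rw [hp2]
        exact hsq
      · -- 3 ≤ p
        have hfx : σ ^ p • x = x := MulAction.pow_period_smul σ x
        have hcomm : ∀ k : ℕ, σ ^ p • σ ^ k • x = σ ^ k • σ ^ p • x := fun k => by
          rw [smul_smul, smul_smul, pow_mul_comm]
        have hfy : σ ^ p • (σ ^ 1 • x) = σ ^ 1 • x := by rw [hcomm, hfx]
        have hfz : σ ^ p • (σ ^ 2 • x) = σ ^ 2 • x := by rw [hcomm, hfx]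
        have hne1 : x ≠ σ ^ 1 • x :=
          fun h => MulAction.pow_smul_ne_of_lt_period one_pos (by omega) h.symm
        have hne2 : x ≠ σ ^ 2 • x :=
          fun h => MulAction.pow_smul_ne_of_lt_period two_pos (by omega) h.symm
        have hne3 : σ ^ 1 • x ≠ σ ^ 2 • x := by
          intro h
          apply hne1
          have := congrArg (fun w => (σ ^ 1)⁻¹ • w) h
          simpa [smul_smul, ← mul_assoc, pow_two] using this
        exact GLaux.mem_center_of_fix3 hne1 hne2 hne3 hfx hfy hfz
    have hgenp : gen ^ p = 1 := by
      have hπσp : π (σ ^ p) = 1 := by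
        rwa [← QuotientGroup.ker_mk' Z, MonoidHom.mem_ker] at hσpZ
      apply Subtype.coe_injective
      show (gen : GL (Fin 2) F ⧸ Z) ^ p = 1
      rw [← hσ, ← map_pow, hπσp]
    have hdp : d ∣ p := hgenord ▸ orderOf_dvd_of_pow_eq_one hgenp
    exact Nat.dvd_antisymm hpd hdp
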